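/- Let d₂ be the Lie algebra on ℂ³ with brackets [f1,f3] = f1, [f2,f3] = f2. Then the space of derivations of d₂ modulo inner derivations (i.e., H¹ with adjoint coefficients) has dimension 3. -/
import Mathlib


/-- The Lie algebra `d₂` on `ℂ³`: `[f1,f3] = f1`, `[f2,f3] = f2`, other brackets zero. -/
def br (u v : Fin 3 → ℂ) : Fin 3 → ℂ :=
  fun k =>
    if k = 0 then u 0 * v 2 - u 2 * v 0
    else if k = 1 then u 1 * v 2 - u 2 * v 1
    else 0

/-- Linearity of a map `ℂ³ → ℂ³`. -/
def IsLin (ρ : (Fin 3 → ℂ) → (Fin 3 → ℂ)) : Prop :=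
  (∀ u v, ρ (u + v) = ρ u + ρ v) ∧ ∀ (s : ℂ) u, ρ (s • u) = s • ρ u

/-- The space of derivations of `d₂` (a subspace, hence equal to its span). -/
noncomputable def Der : Submodule ℂ ((Fin 3 → ℂ) → (Fin 3 → ℂ)) :=
  Submodule.span ℂ {ρ | IsLin ρ ∧ ∀ u v, ρ (br u v) = br (ρ u) v + br u (ρ v)}

/-- The space of inner derivations `ad(w) : u ↦ [u,w]`. -/
noncomputable def Inn : Submodule ℂ ((Fin 3 → ℂ) → (Fin 3 → ℂ)) :=
  Submodule.span ℂ {ρ | ∃ w : Fin 3 → ℂ, ρ = fun u => br u w}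

namespace H1Aux

/-- matrix-unit maps -/
def E (i j : Fin 3) : (Fin 3 → ℂ) → (Fin 3 → ℂ) := fun u k => if k = i then u j else 0

/-- standard basis vectors -/
def e (j : Fin 3) : Fin 3 → ℂ := fun k => if k = j then 1 else 0

def g : Fin 2 × Fin 3 → ((Fin 3 → ℂ) → (Fin 3 → ℂ)) := fun p => E ⟨p.1, by omega⟩ p.2

def gi : Fin 3 → ((Fin 3 → ℂ) → (Fin 3 → ℂ)) := ![E 0 2, E 1 2, E 0 0 + E 1 1]

lemma br_two (u v : Fin 3 → ℂ) : br u v 2 = 0 := by simp [br]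

lemma gen_mem (p : Fin 2 × Fin 3) :
    g p ∈ {ρ | IsLin ρ ∧ ∀ u v, ρ (br u v) = br (ρ u) v + br u (ρ v)} := by
  refine ⟨⟨?_, ?_⟩, ?_⟩
  · intro u v; funext k; fin_cases p <;> simp [g, E] <;> split <;> simp
  · intro s u; funext k; fin_cases p <;> simp [g, E] <;> split <;> simp
  · intro u v; funext k; fin_cases p <;> fin_cases k <;>
      simp [g, E, br] <;> ring

lemma Der_eq : Der = Submodule.span ℂ (Set.range g) := by
  rw [Der]
  apply le_antisymm
  · rw [Submodule.span_le]
    rintro ρ ⟨⟨hadd, hsmul⟩, hder⟩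
    have hu : ∀ u : Fin 3 → ℂ, u = u 0 • e 0 + u 1 • e 1 + u 2 • e 2 := by
      intro u; funext k; fin_cases k <;> simp [e]
    have hρu : ∀ u, ρ u = u 0 • ρ (e 0) + u 1 • ρ (e 1) + u 2 • ρ (e 2) := by
      intro u
      conv_lhs => rw [hu u]
      rw [hadd, hadd, hsmul, hsmul, hsmul]
    have hb0 : br (e 0) (e 2) = e 0 := by funext k; fin_cases k <;> simp [br, e]
    have h0 := hder (e 0) (e 2)
    rw [hb0] at h0
    have h02 : ρ (e 0) 2 = 0 := by
      have := congrFun h0 2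
      simpa [br_two] using this
    have hb1 : br (e 1) (e 2) = e 1 := by funext k; fin_cases k <;> simp [br, e]
    have h1 := hder (e 1) (e 2)
    rw [hb1] at h1
    have h12 : ρ (e 1) 2 = 0 := by
      have := congrFun h1 2
      simpa [br_two] using this
    have h22 : ρ (e 2) 2 = 0 := by
      have := congrFun h0 0
      simp [br, e] at this
      exact this
    have key : ρ = (ρ (e 0) 0) • g (0,0) + (ρ (e 1) 0) • g (0,1) + (ρ (e 2) 0) • g (0,2)
        + (ρ (e 0) 1) • g (1,0) + (ρ (e 1) 1) • g (1,1) + (ρ (e 2) 1) • g (1,2) := by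
      funext u
      rw [hρu u]
      funext k
      fin_cases k <;> simp [g, E, h02, h12, h22] <;> ring
    rw [key]
    have m : ∀ p : Fin 2 × Fin 3, g p ∈ Submodule.span ℂ (Set.range g) :=
      fun p => Submodule.subset_span ⟨p, rfl⟩
    exact Submodule.add_mem _ (Submodule.add_mem _ (Submodule.add_mem _
      (Submodule.add_mem _ (Submodule.add_mem _ (Submodule.smul_mem _ _ (m _))
      (Submodule.smul_mem _ _ (m _))) (Submodule.smul_mem _ _ (m _)))
      (Submodule.smul_mem _ _ (m _))) (Submodule.smul_mem _ _ (m _)))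
      (Submodule.smul_mem _ _ (m _))
  · rw [Submodule.span_le]
    rintro _ ⟨p, rfl⟩
    exact Submodule.subset_span (gen_mem p)

lemma g_indep : LinearIndependent ℂ g := by
  rw [Fintype.linearIndependent_iff]
  intro c hc p
  fin_cases p
  · simpa [Fintype.sum_prod_type, Fin.sum_univ_succ, g, E, e] using congrFun (congrFun hc (e 0)) 0
  · simpa [Fintype.sum_prod_type, Fin.sum_univ_succ, g, E, e] using congrFun (congrFun hc (e 1)) 0
  · simpa [Fintype.sum_prod_type, Fin.sum_univ_succ, g, E, e] using congrFun (congrFun hc (e 2)) 0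
  · simpa [Fintype.sum_prod_type, Fin.sum_univ_succ, g, E, e] using congrFun (congrFun hc (e 0)) 1
  · simpa [Fintype.sum_prod_type, Fin.sum_univ_succ, g, E, e] using congrFun (congrFun hc (e 1)) 1
  · simpa [Fintype.sum_prod_type, Fin.sum_univ_succ, g, E, e] using congrFun (congrFun hc (e 2)) 1

lemma ad_mem_derset (w : Fin 3 → ℂ) :
    (fun u => br u w) ∈ {ρ | IsLin ρ ∧ ∀ u v, ρ (br u v) = br (ρ u) v + br u (ρ v)} := by
  refine ⟨⟨?_, ?_⟩, ?_⟩
  · intro u v; funext k; fin_cases k <;> simp [br] <;> ring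
  · intro s u; funext k; fin_cases k <;> simp [br] <;> ring
  · intro u v; funext k; fin_cases k <;> simp [br] <;> ring

lemma Inn_le_Der : Inn ≤ Der := by
  rw [Inn, Der, Submodule.span_le]
  rintro _ ⟨w, rfl⟩
  exact Submodule.subset_span (ad_mem_derset w)

lemma Inn_eq : Inn = Submodule.span ℂ (Set.range gi) := by
  rw [Inn]
  apply le_antisymm
  · rw [Submodule.span_le]
    rintro _ ⟨w, rfl⟩
    have key : (fun u => br u w) = (- w 0) • gi 0 + (- w 1) • gi 1 + (w 2) • gi 2 := by
      funext u k; fin_cases k <;> simp [gi, E, br] <;> ring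
    rw [key]
    exact Submodule.add_mem _ (Submodule.add_mem _
      (Submodule.smul_mem _ _ (Submodule.subset_span ⟨0, rfl⟩))
      (Submodule.smul_mem _ _ (Submodule.subset_span ⟨1, rfl⟩)))
      (Submodule.smul_mem _ _ (Submodule.subset_span ⟨2, rfl⟩))
  · rw [Submodule.span_le]
    rintro _ ⟨i, rfl⟩
    apply Submodule.subset_span
    fin_cases i
    · exact ⟨-e 0, by funext u k; fin_cases k <;> simp [gi, E, br, e, Matrix.vecHead, Matrix.vecTail]⟩
    · exact ⟨-e 1, by funext u k; fin_cases k <;> simp [gi, E, br, e, Matrix.vecHead, Matrix.vecTail]⟩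
    · exact ⟨e 2, by funext u k; fin_cases k <;> simp [gi, E, br, e, Matrix.vecHead, Matrix.vecTail]⟩

lemma gi_indep : LinearIndependent ℂ gi := by
  rw [Fintype.linearIndependent_iff]
  intro c hc i
  fin_cases i
  · simpa [Fin.sum_univ_succ, gi, E, e] using congrFun (congrFun hc (e 2)) 0
  · simpa [Fin.sum_univ_succ, gi, E, e] using congrFun (congrFun hc (e 2)) 1
  · simpa [Fin.sum_univ_succ, gi, E, e] using congrFun (congrFun hc (e 0)) 0

end H1Aux

set_option synthInstance.maxHeartbeats 1000000

/-- `H¹(d₂; d₂) = Der/Inn` has dimension 3. -/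
theorem h1_d2_dim_three :
    Module.finrank ℂ (↥Der ⧸ Submodule.comap Der.subtype Inn) = 3 := by
  haveI : Module.Finite ℂ ↥Der := by
    rw [H1Aux.Der_eq]
    exact FiniteDimensional.span_of_finite ℂ (Set.finite_range H1Aux.g)
  have h1 : Module.finrank ℂ ↥Der = 6 := by
    rw [H1Aux.Der_eq, finrank_span_eq_card H1Aux.g_indep]
    simp
  have h2 : Module.finrank ℂ ↥(Submodule.comap Der.subtype Inn) = 3 := by
    rw [LinearEquiv.finrank_eq (Submodule.comapSubtypeEquivOfLe H1Aux.Inn_le_Der)]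
    rw [H1Aux.Inn_eq, finrank_span_eq_card H1Aux.gi_indep]
    simp
  have h3 := Submodule.finrank_quotient_add_finrank (Submodule.comap Der.subtype Inn)
  omega
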